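/- arXiv:1901.10261 — 2 statements merged into one kernel-verified Lean document; each statement's English description precedes it below -/
import Mathlib

section
/- Let A, B be bounded operators on a complex Banach space such that the spectrum σ(A) is 2πi-congruence free, and assume Wermuth's theorem holds (if both σ(A) and σ(B') are 2πi-congruence free and exp(A)exp(B') = exp(B')exp(A), then AB' = B'A). Then exp(A)·B = B·exp(A) implies A·B = B·A. -/
open NormedSpace

def CongruenceFree (z : ℂ) (S : Set ℂ) : Prop :=
  ∀ s₁ ∈ S, ∀ s₂ ∈ S, ∀ k : ℤ, k ≠ 0 → s₁ - s₂ ≠ (k : ℂ) * z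

theorem stmt5 {X : Type*} [NormedAddCommGroup X] [NormedSpace ℂ X] [CompleteSpace X]
    (A B : X →L[ℂ] X)
    (hA : CongruenceFree (2 * Real.pi * Complex.I) (spectrum ℂ A))
    (wermuth : ∀ C D : X →L[ℂ] X,
      CongruenceFree (2 * Real.pi * Complex.I) (spectrum ℂ C) →
      CongruenceFree (2 * Real.pi * Complex.I) (spectrum ℂ D) →
      exp C * exp D = exp D * exp C → C * D = D * C)
    (h : exp A * B = B * exp A) : A * B = B * A := by
  obtain ⟨ε, hεpos, hsmall⟩ : ∃ ε : ℝ, 0 < ε ∧ ε * ‖B‖ < Real.pi := by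
    refine ⟨Real.pi / (‖B‖ + 1), div_pos Real.pi_pos (by positivity), ?_⟩
    rw [div_mul_eq_mul_div, div_lt_iff₀ (by positivity)]
    nlinarith [norm_nonneg B, Real.pi_pos]
  have hnormD : ‖(ε : ℂ) • B‖ ≤ ε * ‖B‖ := by
    calc ‖(ε : ℂ) • B‖ ≤ ‖(ε : ℂ)‖ * ‖B‖ := ContinuousLinearMap.opNorm_smul_le _ _
    _ = ε * ‖B‖ := by rw [Complex.norm_real, Real.norm_of_nonneg hεpos.le]
  have hspecD : ∀ s ∈ spectrum ℂ ((ε : ℂ) • B), ‖s‖ < Real.pi := by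
    intro s hs
    have h1 := spectrum.subset_closedBall_norm_mul ((ε : ℂ) • B) hs
    simp only [Metric.mem_closedBall, dist_zero_right] at h1
    have h2 : ‖(1 : X →L[ℂ] X)‖ ≤ 1 := ContinuousLinearMap.norm_id_le
    calc ‖s‖ ≤ ‖(ε : ℂ) • B‖ * ‖(1 : X →L[ℂ] X)‖ := h1
    _ ≤ ‖(ε : ℂ) • B‖ * 1 := mul_le_mul_of_nonneg_left h2 (norm_nonneg _)
    _ = ‖(ε : ℂ) • B‖ := mul_one _
    _ ≤ ε * ‖B‖ := hnormD
    _ < Real.pi := hsmall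
  have hDfree : CongruenceFree (2 * Real.pi * Complex.I) (spectrum ℂ ((ε : ℂ) • B)) := by
    intro s₁ hs₁ s₂ hs₂ k hk heq
    have h1 := hspecD s₁ hs₁
    have h2 := hspecD s₂ hs₂
    have hdiff : ‖s₁ - s₂‖ < 2 * Real.pi := by
      calc ‖s₁ - s₂‖ ≤ ‖s₁‖ + ‖s₂‖ := norm_sub_le _ _
      _ < 2 * Real.pi := by linarith
    rw [heq] at hdiff
    have hnormk : (1 : ℝ) ≤ ‖(k : ℂ)‖ := by
      rw [Complex.norm_intCast]
      exact_mod_cast Int.one_le_abs hk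
    have hnormz : ‖(k : ℂ) * (2 * Real.pi * Complex.I)‖ = ‖(k : ℂ)‖ * (2 * Real.pi) := by
      rw [norm_mul]
      congr 1
      simp [abs_of_pos Real.pi_pos]
    rw [hnormz] at hdiff
    nlinarith [Real.pi_pos]
  have hcomm : Commute (exp A) B := h
  have hcommD : Commute (exp A) ((ε : ℂ) • B) := hcomm.smul_right _
  have hexp : exp A * exp ((ε : ℂ) • B) = exp ((ε : ℂ) • B) * exp A :=
    hcommD.exp_right
  have hmain := wermuth A ((ε : ℂ) • B) hA hDfree hexp
  have hε0 : (ε : ℂ) ≠ 0 := by exact_mod_cast hεpos.ne'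
  rw [mul_smul_comm, smul_mul_assoc] at hmain
  exact smul_right_injective _ hε0 hmain
end

section
/- Let A, B be bounded operators on a complex Hilbert space with A normal and σ(Im A) ⊆ (0, π). Assuming Wermuth's theorem (commuting exponentials of operators with 2πi-congruence free spectra implies commuting operators), we have exp(A)·B = B·exp(A) if and only if A·B = B·A. -/
open ContinuousLinearMap Complex Real NormedSpace

/-- For a normal operator `A`, the imaginary part of any spectral value of `A`
lies in the spectrum of `Im A`. -/
lemma im_mem_spectrum_im_aux {H : Type*} [NormedAddCommGroup H] [InnerProductSpace ℂ H]
    [CompleteSpace H] (A : H →L[ℂ] H) (hA : IsStarNormal A) {z : ℂ}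
    (hz : z ∈ spectrum ℂ A) :
    ((z.im : ℝ) : ℂ) ∈ spectrum ℂ ((1 / (2 * I) : ℂ) • (A - adjoint A)) := by
  let S := StarAlgebra.elemental ℂ A
  have hcl : IsClosed (S : Set (H →L[ℂ] H)) := StarAlgebra.elemental.isClosed ℂ A
  let a : S := ⟨A, StarAlgebra.elemental.self_mem ℂ A⟩
  have ha : z ∈ spectrum ℂ a := by
    rw [StarSubalgebra.spectrum_eq (hS := hcl)]; exact hz
  obtain ⟨φ, hφ⟩ := WeakDual.CharacterSpace.mem_spectrum_iff_exists.mp ha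
  let b : S := (1 / (2 * I) : ℂ) • (a - star a)
  have hb : φ b = (z.im : ℂ) := by
    have : φ (star a) = starRingEnd ℂ (φ a) := map_star φ a
    simp only [b, map_smul, map_sub, this, hφ]
    rw [smul_eq_mul]
    have : z - starRingEnd ℂ z = 2 * I * z.im := by
      simp [Complex.ext_iff]; ring
    rw [this]
    field_simp
  have hmem : φ b ∈ spectrum ℂ b :=
    AlgHom.apply_mem_spectrum (WeakDual.CharacterSpace.equivAlgHom φ) b
  rw [hb] at hmem
  rw [StarSubalgebra.spectrum_eq (hS := hcl)] at hmem
  have : ((b : H →L[ℂ] H)) = (1 / (2 * I) : ℂ) • (A - adjoint A) := by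
    simp [b, a, ContinuousLinearMap.star_eq_adjoint]
  rwa [this] at hmem

theorem stmt16 {H : Type*} [NormedAddCommGroup H] [InnerProductSpace ℂ H]
    [CompleteSpace H] (A B : H →L[ℂ] H)
    (hA : A * adjoint A = adjoint A * A)
    (hIm : spectrum ℂ ((1 / (2 * I) : ℂ) • (A - adjoint A)) ⊆
      (fun x : ℝ => (x : ℂ)) '' Set.Ioo 0 π)
    (wermuth : ∀ C D : H →L[ℂ] H,
      CongruenceFree (2 * (π : ℂ) * I) (spectrum ℂ C) →
      CongruenceFree (2 * (π : ℂ) * I) (spectrum ℂ D) →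
      exp C * exp D = exp D * exp C → C * D = D * C) :
    exp A * B = B * exp A ↔ A * B = B * A := by
  constructor
  · intro h
    -- the spectrum of A lies in the strip 0 < Im z < π
    have hnormal : IsStarNormal A := ⟨by
      rw [ContinuousLinearMap.star_eq_adjoint]; exact hA.symm⟩
    have hstrip : ∀ z ∈ spectrum ℂ A, z.im ∈ Set.Ioo 0 π := by
      intro z hz
      obtain ⟨x, hx, hxe⟩ := hIm (im_mem_spectrum_im_aux A hnormal hz)
      have hxe' : (x : ℂ) = (z.im : ℂ) := hxe
      have : x = z.im := by exact_mod_cast hxe'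
      rwa [this] at hx
    have hcfA : CongruenceFree (2 * (π : ℂ) * I) (spectrum ℂ A) := by
      intro s₁ h₁ s₂ h₂ k hk heq
      have h₁' := hstrip s₁ h₁
      have h₂' := hstrip s₂ h₂
      have him : s₁.im - s₂.im = (k : ℝ) * (2 * π) := by
        have := congrArg Complex.im heq
        simpa [Complex.mul_im] using this
      have hlt : |s₁.im - s₂.im| < π := by
        rw [abs_sub_lt_iff]
        constructor <;> nlinarith [h₁'.1, h₁'.2, h₂'.1, h₂'.2]
      have hge : (2 : ℝ) * π ≤ |(k : ℝ) * (2 * π)| := by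
        rw [abs_mul, abs_of_pos (by positivity : (0:ℝ) < 2 * π)]
        have : (1 : ℝ) ≤ |(k : ℝ)| := by
          rw [← Int.cast_abs]; exact_mod_cast Int.one_le_abs hk
        nlinarith [Real.pi_pos]
      rw [him] at hlt
      nlinarith [Real.pi_pos]
    -- scale B so that its spectrum is small
    set t : ℝ := π / (2 * (‖B‖ + 1)) with ht_def
    have hBpos : (0:ℝ) < ‖B‖ + 1 := by positivity
    have ht : 0 < t := by positivity
    have htB : t * ‖B‖ < π := by
      rw [ht_def, div_mul_eq_mul_div, div_lt_iff₀ (by positivity)]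
      nlinarith [Real.pi_pos, norm_nonneg B]
    have hcfB : CongruenceFree (2 * (π : ℂ) * I) (spectrum ℂ ((t : ℂ) • B)) := by
      intro s₁ h₁ s₂ h₂ k hk heq
      have hn : ∀ s ∈ spectrum ℂ ((t : ℂ) • B), ‖s‖ ≤ t * ‖B‖ := by
        intro s hs
        have h1 : s ∈ Metric.closedBall (0 : ℂ) (‖(t : ℂ) • B‖ * ‖(1 : H →L[ℂ] H)‖) :=
          spectrum.subset_closedBall_norm_mul _ hs
        rw [Metric.mem_closedBall, dist_zero_right] at h1
        have h2 : ‖(1 : H →L[ℂ] H)‖ ≤ 1 := ContinuousLinearMap.norm_id_le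
        have h3 : ‖(t : ℂ) • B‖ = t * ‖B‖ := by
          rw [norm_smul, Complex.norm_real, Real.norm_eq_abs, abs_of_pos ht]
        calc ‖s‖ ≤ ‖(t : ℂ) • B‖ * ‖(1 : H →L[ℂ] H)‖ := h1
          _ ≤ t * ‖B‖ * 1 := by rw [h3]; exact mul_le_mul_of_nonneg_left h2 (by positivity)
          _ = t * ‖B‖ := mul_one _
      have hdiff : ‖s₁ - s₂‖ < 2 * π := by
        calc ‖s₁ - s₂‖ ≤ ‖s₁‖ + ‖s₂‖ := norm_sub_le _ _
          _ ≤ t * ‖B‖ + t * ‖B‖ := add_le_add (hn s₁ h₁) (hn s₂ h₂)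
          _ < 2 * π := by nlinarith
      have hge : (2:ℝ) * π ≤ ‖(k : ℂ) * (2 * (π : ℂ) * I)‖ := by
        rw [norm_mul, norm_mul, norm_mul, Complex.norm_I, Complex.norm_intCast,
          Complex.norm_ofNat, Complex.norm_real, Real.norm_eq_abs,
          abs_of_pos Real.pi_pos, mul_one]
        have : (1 : ℝ) ≤ |(k : ℝ)| := by
          rw [← Int.cast_abs]; exact_mod_cast Int.one_le_abs hk
        nlinarith [Real.pi_pos]
      rw [heq] at hdiff
      linarith
    -- exp A commutes with exp (t • B)
    have hcB : Commute (exp A) B := h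
    have hcexp : exp A * exp ((t : ℂ) • B) = exp ((t : ℂ) • B) * exp A :=
      ((hcB.smul_right (t : ℂ)).exp_right)
    have hw := wermuth A ((t : ℂ) • B) hcfA hcfB hcexp
    have : (t : ℂ) • (A * B) = (t : ℂ) • (B * A) := by
      rw [← mul_smul_comm, ← smul_mul_assoc]; exact hw
    have htne : (t : ℂ) ≠ 0 := by
      simp only [ne_eq, Complex.ofReal_eq_zero]; exact ne_of_gt ht
    exact smul_right_injective _ htne this
  · intro h
    have hc : Commute A B := h
    exact hc.exp_left
end
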